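/- arXiv:2107.04269 — 2 statements merged into one kernel-verified Lean document; each statement's English description precedes it below -/
import Mathlib

section
/- Let A, N_1, …, N_m ∈ ℝ^{n×n}, C ∈ ℝ^{p×n}, γ > 0 with every eigenvalue of I ⊗ A + A ⊗ I + γ^{-2} Σ_{k=1}^m N_k ⊗ N_k having strictly negative real part, let u ∈ L² be a continuous control and Φ the fundamental solution of the bilinear system. Set Q := ∫₀^∞ Z*_γ(s, C^⊤C) ds, where Z*_γ(·, C^⊤C) solves the adjoint generalized Lyapunov matrix differential equation, and let q be a unit eigenvector of Q with eigenvalue μ ≥ 0. Then for every t₀ ≥ 0, (∫_{t₀}^∞ ‖C Φ(t, t₀) q‖₂² dt)^{1/2} ≤ μ^{1/2} · exp{0.5 ‖γ u⁰‖_{L²}²}. -/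
open MeasureTheory Matrix
open scoped Kronecker Classical

set_option linter.unusedVariables false

attribute [local instance] Matrix.normedAddCommGroup Matrix.normedSpace

variable {n : ℕ}

lemma quad_symm {W : Matrix (Fin n) (Fin n) ℝ} (h : Wᵀ = W) (x y : Fin n → ℝ) :
    x ⬝ᵥ W *ᵥ y = y ⬝ᵥ W *ᵥ x := by
  rw [dotProduct_mulVec, ← mulVec_transpose, h, dotProduct_comm]

lemma quad_smul (W : Matrix (Fin n) (Fin n) ℝ) (c : ℝ) (y : Fin n → ℝ) :
    (c • y) ⬝ᵥ W *ᵥ (c • y) = c^2 * (y ⬝ᵥ W *ᵥ y) := by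
  rw [smul_dotProduct, mulVec_smul, dotProduct_smul]
  simp [smul_eq_mul]; ring

lemma dot_self_nonneg (y : Fin n → ℝ) : 0 ≤ y ⬝ᵥ y :=
  Finset.sum_nonneg fun i _ => mul_self_nonneg _

lemma dot_self_eq_zero {y : Fin n → ℝ} (h : y ⬝ᵥ y = 0) : y = 0 := by
  funext i
  have h2 := Finset.sum_eq_zero_iff_of_nonneg
    (fun i (_ : i ∈ Finset.univ) => mul_self_nonneg (y i)) |>.mp h i (Finset.mem_univ i)
  exact mul_self_eq_zero.mp h2

lemma quad_nonneg_of_unit {W : Matrix (Fin n) (Fin n) ℝ}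
    (h : ∀ x, x ⬝ᵥ x = 1 → 0 ≤ x ⬝ᵥ W *ᵥ x) (y : Fin n → ℝ) :
    0 ≤ y ⬝ᵥ W *ᵥ y := by
  rcases eq_or_ne y 0 with rfl | hy
  · simp
  · have hyy : 0 < y ⬝ᵥ y := (dot_self_nonneg y).lt_of_ne' (fun h0 => hy (dot_self_eq_zero h0))
    set r := Real.sqrt (y ⬝ᵥ y) with hr
    have hrpos : 0 < r := Real.sqrt_pos.mpr hyy
    have hrr : r⁻¹ ^ 2 * (y ⬝ᵥ y) = 1 := by
      rw [inv_pow, hr, Real.sq_sqrt hyy.le, inv_mul_cancel₀ hyy.ne']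
    have hunit : (r⁻¹ • y) ⬝ᵥ (r⁻¹ • y) = 1 := by
      rw [smul_dotProduct, dotProduct_smul, smul_eq_mul, smul_eq_mul, ← mul_assoc, ← sq, hrr]
    have := h _ hunit
    rw [quad_smul] at this
    nlinarith [sq_nonneg r⁻¹, hrr]

/-- PSD + symmetric + zero quadratic form ⇒ in kernel. -/
lemma psd_kernel {W : Matrix (Fin n) (Fin n) ℝ} (hpsd : ∀ y, 0 ≤ y ⬝ᵥ W *ᵥ y)
    (hsym : Wᵀ = W) {x : Fin n → ℝ} (hx : x ⬝ᵥ W *ᵥ x = 0) : W *ᵥ x = 0 := by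
  have key : ∀ y, y ⬝ᵥ (W *ᵥ x) = 0 := by
    intro y
    set a := y ⬝ᵥ W *ᵥ y with ha
    set b := y ⬝ᵥ W *ᵥ x with hb
    have ha0 : 0 ≤ a := hpsd y
    have hexp : ∀ s : ℝ, 0 ≤ s^2 * a + 2 * s * b := by
      intro s
      have := hpsd (s • y + x)
      have e : (s • y + x) ⬝ᵥ W *ᵥ (s • y + x) = s^2 * a + 2 * s * b := by
        rw [add_dotProduct, mulVec_add, dotProduct_add, dotProduct_add,
          smul_dotProduct, smul_dotProduct, mulVec_smul, dotProduct_smul, dotProduct_smul]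
        have hxy : x ⬝ᵥ W *ᵥ y = b := quad_symm hsym x y
        rw [hxy, hx] at *
        simp [smul_eq_mul, ← ha, ← hb]; ring
      rw [e] at this; exact this
    by_contra hb0
    have hbne : b ≠ 0 := hb0
    have := hexp (-b / (a + 1))
    have hA1 : (0:ℝ) < a + 1 := by linarith
    rw [div_pow, neg_sq] at this
    have : 0 ≤ b^2 / (a+1)^2 * a - 2 * (b / (a+1)) * b := by
      have e2 : b^2/(a+1)^2*a + 2*(-b/(a+1))*b = b^2/(a+1)^2*a - 2*(b/(a+1))*b := by ring
      linarith [e2 ▸ this]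
    have hfin : b^2 / (a+1)^2 * a - 2 * (b / (a+1)) * b < 0 := by
      have h1 : b^2 / (a+1)^2 * a - 2 * (b / (a+1)) * b
          = (b^2 / (a+1)^2) * (a - 2*(a+1)) := by field_simp
      rw [h1]
      apply mul_neg_of_pos_of_neg
      · positivity
      · linarith
    linarith
  have := key (W *ᵥ x)
  exact dot_self_eq_zero this
variable {n : ℕ}

lemma quad_symm' {W : Matrix (Fin n) (Fin n) ℝ} (h : Wᵀ = W) (x y : Fin n → ℝ) :
    x ⬝ᵥ W *ᵥ y = y ⬝ᵥ W *ᵥ x := by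
  rw [dotProduct_mulVec, ← mulVec_transpose, h, dotProduct_comm]

/-- completing-the-square estimate -/
lemma complete_square {W : Matrix (Fin n) (Fin n) ℝ} (hpsd : ∀ z, 0 ≤ z ⬝ᵥ W *ᵥ z)
    (hsym : Wᵀ = W) (y w : Fin n → ℝ) (uk γ : ℝ) (hγ : γ ≠ 0) :
    2 * uk * (y ⬝ᵥ W *ᵥ w) - (γ^2)⁻¹ * (y ⬝ᵥ W *ᵥ y) ≤ γ^2 * uk^2 * (w ⬝ᵥ W *ᵥ w) := by
  have h0 := hpsd (y - (γ^2 * uk) • w)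
  have e : (y - (γ^2 * uk) • w) ⬝ᵥ W *ᵥ (y - (γ^2 * uk) • w)
      = (y ⬝ᵥ W *ᵥ y) - 2 * (γ^2*uk) * (y ⬝ᵥ W *ᵥ w) + (γ^2*uk)^2 * (w ⬝ᵥ W *ᵥ w) := by
    rw [sub_dotProduct, mulVec_sub, dotProduct_sub, dotProduct_sub,
      smul_dotProduct, mulVec_smul, dotProduct_smul, dotProduct_smul,
      quad_symm' hsym w y]
    simp only [smul_dotProduct, dotProduct_smul, mulVec_smul, smul_eq_mul]; ring
  rw [e] at h0
  have hγ2 : (0:ℝ) < γ^2 := by positivity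
  have := mul_le_mul_of_nonneg_left h0 (le_of_lt (inv_pos.mpr hγ2))
  have e2 : (γ^2)⁻¹ * ((y ⬝ᵥ W *ᵥ y) - 2*(γ^2*uk)*(y ⬝ᵥ W *ᵥ w) + (γ^2*uk)^2 * (w ⬝ᵥ W *ᵥ w))
      = (γ^2)⁻¹ * (y ⬝ᵥ W *ᵥ y) - 2*uk*(y ⬝ᵥ W *ᵥ w) + γ^2*uk^2*(w ⬝ᵥ W *ᵥ w) := by
    field_simp
  rw [mul_zero, e2] at this
  linarith

variable {m : ℕ} (A : Matrix (Fin n) (Fin n) ℝ) (N : Fin m → Matrix (Fin n) (Fin n) ℝ) (c : ℝ)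

/-- The generalized Lyapunov operator as a linear map. -/
def lyapL : Matrix (Fin n) (Fin n) ℝ →ₗ[ℝ] Matrix (Fin n) (Fin n) ℝ where
  toFun X := Aᵀ * X + X * A + c • ∑ k, (N k)ᵀ * X * N k
  map_add' X Y := by
    simp only [Matrix.mul_add, Matrix.add_mul, smul_add, Finset.sum_add_distrib]
    abel
  map_smul' r X := by
    simp only [RingHom.id_apply, Matrix.mul_smul, Matrix.smul_mul, smul_smul, Finset.smul_sum,
      smul_add, mul_comm r c]

lemma lyapL_transpose (X : Matrix (Fin n) (Fin n) ℝ) :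
    (lyapL A N c X)ᵀ = lyapL A N c Xᵀ := by
  simp only [lyapL, LinearMap.coe_mk, AddHom.coe_mk, transpose_add, transpose_mul,
    transpose_smul, transpose_sum, transpose_transpose, Matrix.mul_assoc]
  abel

/-- The associated continuous linear map. -/
noncomputable def lyapLc : Matrix (Fin n) (Fin n) ℝ →L[ℝ] Matrix (Fin n) (Fin n) ℝ :=
  LinearMap.toContinuousLinearMap (lyapL A N c)

@[simp] lemma lyapLc_apply (X : Matrix (Fin n) (Fin n) ℝ) :
    lyapLc A N c X = Aᵀ * X + X * A + c • ∑ k, (N k)ᵀ * X * N k := rfl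

/-- Composition of a `HasDerivAt` with a continuous linear map. -/
lemma HasDerivAt.clmComp {E F : Type*} [NormedAddCommGroup E] [NormedSpace ℝ E]
    [NormedAddCommGroup F] [NormedSpace ℝ F] {f : ℝ → E} {f' : E} {t : ℝ}
    (ℓ : E →L[ℝ] F) (hf : HasDerivAt f f' t) :
    HasDerivAt (fun s => ℓ (f s)) (ℓ f') t :=
  (ℓ.hasFDerivAt.comp_hasDerivAt t hf)

/-- transpose as a continuous linear map -/
noncomputable def transposeCLM : Matrix (Fin n) (Fin n) ℝ →L[ℝ] Matrix (Fin n) (Fin n) ℝ :=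
  LinearMap.toContinuousLinearMap (Matrix.transposeLinearEquiv (Fin n) (Fin n) ℝ ℝ).toLinearMap

@[simp] lemma transposeCLM_apply (X : Matrix (Fin n) (Fin n) ℝ) : transposeCLM X = Xᵀ := rfl

lemma lyapLc_transpose (A : Matrix (Fin n) (Fin n) ℝ) (N : Fin m → Matrix (Fin n) (Fin n) ℝ)
    (c : ℝ) (X : Matrix (Fin n) (Fin n) ℝ) : (lyapLc A N c X)ᵀ = lyapLc A N c Xᵀ :=
  lyapL_transpose A N c X

lemma Zs_symm (A : Matrix (Fin n) (Fin n) ℝ) (N : Fin m → Matrix (Fin n) (Fin n) ℝ) (c : ℝ)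
    (Zs : ℝ → Matrix (Fin n) (Fin n) ℝ)
    (hsym0 : (Zs 0)ᵀ = Zs 0)
    (hZsode : ∀ t, 0 ≤ t → HasDerivAt Zs (lyapLc A N c (Zs t)) t) :
    ∀ t, 0 ≤ t → (Zs t)ᵀ = Zs t := by
  intro T hT
  have hfd : ∀ t, 0 ≤ t →
      HasDerivAt (fun s => (Zs s)ᵀ) (lyapLc A N c ((Zs t)ᵀ)) t := by
    intro t ht
    have h1 := HasDerivAt.clmComp transposeCLM (hZsode t ht)
    rw [← lyapLc_transpose]; exact h1
  have key : Set.EqOn (fun t => (Zs t)ᵀ) Zs (Set.Icc 0 T) := by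
    apply ODE_solution_unique (v := fun _ X => lyapLc A N c X)
      (fun _ => (lyapLc A N c).lipschitz)
    · exact fun t ht => ((hfd t ht.1).continuousAt).continuousWithinAt
    · exact fun t ht => (hfd t ht.1).hasDerivWithinAt
    · exact fun t ht => ((hZsode t ht.1).continuousAt).continuousWithinAt
    · exact fun t ht => (hZsode t ht.1).hasDerivWithinAt
    · exact hsym0
  exact key ⟨hT, le_refl T⟩

lemma dot_transpose_mulVec {p' : ℕ} (C : Matrix (Fin p') (Fin n) ℝ) (x : Fin n → ℝ)
    (z : Fin p' → ℝ) : x ⬝ᵥ (Cᵀ *ᵥ z) = (C *ᵥ x) ⬝ᵥ z := by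
  rw [dotProduct_mulVec, vecMul_transpose]

lemma quad_continuous (M : Matrix (Fin n) (Fin n) ℝ) :
    Continuous fun x : Fin n → ℝ => x ⬝ᵥ M *ᵥ x := by
  simp only [dotProduct, mulVec]
  exact continuous_finset_sum _ fun i _ => (continuous_apply i).mul
    (continuous_finset_sum _ fun j _ => continuous_const.mul (continuous_apply j))

lemma unit_entry_le {x : Fin n → ℝ} (hx : x ⬝ᵥ x = 1) (i : Fin n) : |x i| ≤ 1 := by
  have h1 : x i * x i ≤ 1 := by
    rw [← hx]
    exact Finset.single_le_sum (f := fun j => x j * x j)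
      (fun j _ => mul_self_nonneg _) (Finset.mem_univ i)
  nlinarith [abs_nonneg (x i), sq_abs (x i)]

lemma abs_quad_le (M : Matrix (Fin n) (Fin n) ℝ) {x : Fin n → ℝ} (hx : ∀ i, |x i| ≤ 1) :
    |x ⬝ᵥ M *ᵥ x| ≤ ∑ i, ∑ j, |M i j| := by
  simp only [dotProduct, mulVec]
  refine (Finset.abs_sum_le_sum_abs _ _).trans (Finset.sum_le_sum fun i _ => ?_)
  rw [abs_mul]
  calc |x i| * |∑ j, M i j * x j| ≤ 1 * ∑ j, |M i j| := by
        apply mul_le_mul (hx i) ?_ (abs_nonneg _) zero_le_one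
        refine (Finset.abs_sum_le_sum_abs _ _).trans (Finset.sum_le_sum fun j _ => ?_)
        rw [abs_mul]
        calc |M i j| * |x j| ≤ |M i j| * 1 := mul_le_mul_of_nonneg_left (hx j) (abs_nonneg _)
          _ = |M i j| := mul_one _
    _ = ∑ j, |M i j| := one_mul _

lemma mulVec_dot_self_le (M : Matrix (Fin n) (Fin n) ℝ) {x : Fin n → ℝ} (hx : ∀ i, |x i| ≤ 1) :
    (M *ᵥ x) ⬝ᵥ (M *ᵥ x) ≤ ∑ i, (∑ j, |M i j|)^2 := by
  simp only [dotProduct, mulVec]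
  refine Finset.sum_le_sum fun i _ => ?_
  rw [← sq]
  have habs : |∑ j, M i j * x j| ≤ ∑ j, |M i j| := by
    refine (Finset.abs_sum_le_sum_abs _ _).trans (Finset.sum_le_sum fun j _ => ?_)
    rw [abs_mul]
    calc |M i j| * |x j| ≤ |M i j| * 1 := mul_le_mul_of_nonneg_left (hx j) (abs_nonneg _)
      _ = |M i j| := mul_one _
  exact sq_le_sq' (neg_le_of_abs_le habs) (le_of_abs_le habs)

/-- the quadratic form in the matrix, as a continuous linear map -/
noncomputable def quadCLM (x : Fin n → ℝ) : Matrix (Fin n) (Fin n) ℝ →L[ℝ] ℝ :=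
  LinearMap.toContinuousLinearMap
  { toFun := fun M => x ⬝ᵥ M *ᵥ x
    map_add' := fun M₁ M₂ => by rw [add_mulVec, dotProduct_add]
    map_smul' := fun r M => by
      simp only [RingHom.id_apply]; rw [smul_mulVec, dotProduct_smul, smul_eq_mul] }

@[simp] lemma quadCLM_apply (x : Fin n → ℝ) (M : Matrix (Fin n) (Fin n) ℝ) :
    quadCLM x M = x ⬝ᵥ M *ᵥ x := rfl

lemma quad_bound_norm (M : Matrix (Fin n) (Fin n) ℝ) {x : Fin n → ℝ} (hx : ∀ i, |x i| ≤ 1) :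
    |x ⬝ᵥ M *ᵥ x| ≤ (n:ℝ)^2 * ‖M‖ := by
  refine (abs_quad_le M hx).trans ?_
  calc ∑ i, ∑ j, |M i j| ≤ ∑ _i : Fin n, ∑ _j : Fin n, ‖M‖ := by
        refine Finset.sum_le_sum fun i _ => Finset.sum_le_sum fun j _ => ?_
        exact Matrix.norm_entry_le_entrywise_sup_norm M
    _ = (n:ℝ)^2 * ‖M‖ := by simp [Finset.sum_const, sq]; ring

lemma sum_mulVec' {ι : Type*} (s : Finset ι) (M : ι → Matrix (Fin n) (Fin n) ℝ)
    (x : Fin n → ℝ) : (∑ k ∈ s, M k) *ᵥ x = ∑ k ∈ s, (M k) *ᵥ x := by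
  funext i
  simp only [mulVec, dotProduct, Matrix.sum_apply, Finset.sum_apply, Finset.sum_mul]
  rw [Finset.sum_comm]

lemma dotProduct_sum' {ι : Type*} (s : Finset ι) (x : Fin n → ℝ) (v : ι → Fin n → ℝ) :
    x ⬝ᵥ (∑ k ∈ s, v k) = ∑ k ∈ s, x ⬝ᵥ v k := by
  simp only [dotProduct, Finset.sum_apply, Finset.mul_sum]
  rw [Finset.sum_comm]

lemma Zs_psd (A : Matrix (Fin n) (Fin n) ℝ) (N : Fin m → Matrix (Fin n) (Fin n) ℝ)
    {c' : ℝ} (hc' : 0 < c')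
    (Zs : ℝ → Matrix (Fin n) (Fin n) ℝ)
    (hpsd0 : ∀ y, 0 ≤ y ⬝ᵥ (Zs 0) *ᵥ y)
    (hZsode : ∀ t, 0 ≤ t → HasDerivAt Zs (lyapLc A N c' (Zs t)) t)
    (hsym : ∀ t, 0 ≤ t → (Zs t)ᵀ = Zs t) :
    ∀ t, 0 ≤ t → ∀ y, 0 ≤ y ⬝ᵥ (Zs t) *ᵥ y := by
  have hZscont : ∀ t, 0 ≤ t → ContinuousAt Zs t := fun t ht => (hZsode t ht).continuousAt
  set cA1 := ∑ i, ∑ j, |Aᵀ i j| with hcA1def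
  set cA2 := ∑ i, ∑ j, |A i j| with hcA2def
  set cN := ∑ k, ∑ i, (∑ j, |(N k) i j|)^2 with hcNdef
  have hcA1 : 0 ≤ cA1 := Finset.sum_nonneg fun i _ => Finset.sum_nonneg fun j _ => abs_nonneg _
  have hcA2 : 0 ≤ cA2 := Finset.sum_nonneg fun i _ => Finset.sum_nonneg fun j _ => abs_nonneg _
  have hcN : 0 ≤ cN := Finset.sum_nonneg fun k _ => Finset.sum_nonneg fun i _ => sq_nonneg _
  set cc := 1 + cA1 + cA2 + c' * cN with hccdef
  have main : ∀ T, 0 ≤ T → ∀ δ : ℝ, 0 < δ → ∀ t ∈ Set.Icc (0:ℝ) T, ∀ x : Fin n → ℝ,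
      x ⬝ᵥ x = 1 → 0 < x ⬝ᵥ (Zs t) *ᵥ x + δ * Real.exp (cc * t) := by
    intro T hT δ hδ
    by_contra hcon
    push_neg at hcon
    set S := {t : ℝ | t ∈ Set.Icc (0:ℝ) T ∧
      ∃ x : Fin n → ℝ, x ⬝ᵥ x = 1 ∧ x ⬝ᵥ (Zs t) *ᵥ x + δ * Real.exp (cc * t) ≤ 0} with hSdef
    have hS : S.Nonempty := by
      obtain ⟨t, ht, x, hx1, hx2⟩ := hcon
      exact ⟨t, ht, x, hx1, hx2⟩
    have hbdd : BddBelow S := ⟨0, fun t ht => ht.1.1⟩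
    set ts := sInf S with htsdef
    have hts0 : 0 ≤ ts := le_csInf hS fun b hb => hb.1.1
    have htsT : ts ≤ T := by
      obtain ⟨s₀, hs₀⟩ := hS
      exact (csInf_le hbdd hs₀).trans hs₀.1.2
    have hlow : ∀ t, 0 ≤ t → t < ts → ∀ x : Fin n → ℝ, x ⬝ᵥ x = 1 →
        0 < x ⬝ᵥ (Zs t) *ᵥ x + δ * Real.exp (cc * t) := by
      intro t h0 hlt x hx
      by_contra h
      push_neg at h
      exact absurd (csInf_le hbdd ⟨⟨h0, hlt.le.trans htsT⟩, x, hx, h⟩) (not_le.mpr hlt)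
    -- Step A: ts ∈ S
    have htsS : ts ∈ S := by
      by_contra hns
      have hpos : ∀ x : Fin n → ℝ, x ⬝ᵥ x = 1 →
          0 < x ⬝ᵥ (Zs ts) *ᵥ x + δ * Real.exp (cc * ts) := by
        intro x hx
        by_contra h
        push_neg at h
        exact hns ⟨⟨hts0, htsT⟩, x, hx, h⟩
      obtain ⟨s₀, hs₀⟩ := id hS
      obtain ⟨x₀, hx₀, _⟩ := hs₀.2
      have hKc : IsCompact {x : Fin n → ℝ | x ⬝ᵥ x = 1} := by
        apply Metric.isCompact_of_isClosed_isBounded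
        · exact isClosed_eq (quad_continuous 1 |>.congr fun x => by simp [one_mulVec]) continuous_const
        · apply Bornology.IsBounded.subset (Metric.isBounded_closedBall (x := (0 : Fin n → ℝ)) (r := 1))
          intro x hx
          rw [Metric.mem_closedBall, dist_zero_right]
          rw [pi_norm_le_iff_of_nonneg zero_le_one]
          intro i
          rw [Real.norm_eq_abs]
          exact unit_entry_le hx i
      obtain ⟨xm, hxmK, hxmmin⟩ := hKc.exists_isMinOn (α := ℝ)
        (f := fun x : Fin n → ℝ => x ⬝ᵥ (Zs ts) *ᵥ x + δ * Real.exp (cc * ts)) ⟨x₀, hx₀⟩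
        (((quad_continuous (Zs ts)).add continuous_const).continuousOn)
      set ε := xm ⬝ᵥ (Zs ts) *ᵥ xm + δ * Real.exp (cc * ts) with hεdef
      have hε : 0 < ε := hpos xm hxmK
      have hev : ∀ᶠ t in nhds ts,
          (n:ℝ)^2 * ‖Zs t - Zs ts‖ + δ * |Real.exp (cc*t) - Real.exp (cc*ts)| < ε := by
        have hc1 : ContinuousAt (fun t => ‖Zs t - Zs ts‖) ts :=
          ((hZscont ts hts0).sub continuousAt_const).norm
        have hc2 : ContinuousAt (fun t => |Real.exp (cc*t) - Real.exp (cc*ts)|) ts :=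
          (((Real.continuous_exp.comp (continuous_const.mul continuous_id)).continuousAt).sub
            continuousAt_const).abs
        have hcont : ContinuousAt (fun t => (n:ℝ)^2 * ‖Zs t - Zs ts‖
            + δ * |Real.exp (cc*t) - Real.exp (cc*ts)|) ts :=
          (continuousAt_const.mul hc1).add (continuousAt_const.mul hc2)
        have h0 : (n:ℝ)^2 * ‖Zs ts - Zs ts‖ + δ * |Real.exp (cc*ts) - Real.exp (cc*ts)| = 0 := by
          simp
        have := hcont.tendsto
        rw [h0] at this
        exact this.eventually (eventually_lt_nhds hε)
      obtain ⟨η, hη, hball⟩ := Metric.eventually_nhds_iff.mp hev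
      obtain ⟨s, hsS, hslt⟩ := (csInf_lt_iff hbdd hS).mp (show ts < ts + η by linarith)
      have hsge : ts ≤ s := csInf_le hbdd hsS
      obtain ⟨x, hx, hgx⟩ := hsS.2
      have hb := hball (show dist s ts < η by
        rw [Real.dist_eq, abs_of_nonneg (by linarith)]; linarith)
      have hxabs : ∀ i, |x i| ≤ 1 := unit_entry_le hx
      have hdiff : |(x ⬝ᵥ (Zs s) *ᵥ x + δ * Real.exp (cc*s))
            - (x ⬝ᵥ (Zs ts) *ᵥ x + δ * Real.exp (cc*ts))|
          ≤ (n:ℝ)^2 * ‖Zs s - Zs ts‖ + δ * |Real.exp (cc*s) - Real.exp (cc*ts)| := by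
        have e1 : x ⬝ᵥ (Zs s) *ᵥ x - x ⬝ᵥ (Zs ts) *ᵥ x = x ⬝ᵥ (Zs s - Zs ts) *ᵥ x := by
          rw [sub_mulVec, dotProduct_sub]
        have e2 : (x ⬝ᵥ (Zs s) *ᵥ x + δ * Real.exp (cc*s))
            - (x ⬝ᵥ (Zs ts) *ᵥ x + δ * Real.exp (cc*ts))
            = x ⬝ᵥ (Zs s - Zs ts) *ᵥ x + δ * (Real.exp (cc*s) - Real.exp (cc*ts)) := by
          rw [← e1]; ring
        rw [e2]
        refine (abs_add_le _ _).trans (add_le_add (quad_bound_norm _ hxabs) ?_)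
        rw [abs_mul, abs_of_pos hδ]
      have hminx : ε ≤ x ⬝ᵥ (Zs ts) *ᵥ x + δ * Real.exp (cc*ts) := hxmmin hx
      have habs := abs_le.mp hdiff
      linarith [habs.1]
    -- Step B: ts > 0
    obtain ⟨x, hxunit, hgle⟩ := htsS.2
    have hxabs : ∀ i, |x i| ≤ 1 := unit_entry_le hxunit
    have htspos : 0 < ts := by
      rcases hts0.lt_or_eq with h | h
      · exact h
      · exfalso
        rw [← h] at hgle
        have h1 : 0 ≤ x ⬝ᵥ (Zs 0) *ᵥ x := hpsd0 x
        have h2 : 0 < δ * Real.exp (cc * 0) := by positivity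
        linarith
    -- Step C: kernel vector
    set r := δ * Real.exp (cc * ts) with hrdef
    have hr : 0 < r := by positivity
    set W := Zs ts + r • (1 : Matrix (Fin n) (Fin n) ℝ) with hWdef
    have hWquad : ∀ y : Fin n → ℝ, y ⬝ᵥ W *ᵥ y = y ⬝ᵥ (Zs ts) *ᵥ y + r * (y ⬝ᵥ y) := by
      intro y
      rw [hWdef, add_mulVec, dotProduct_add, smul_mulVec, one_mulVec,
        dotProduct_smul, smul_eq_mul]
    have hWpsd : ∀ y, 0 ≤ y ⬝ᵥ W *ᵥ y := by
      apply quad_nonneg_of_unit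
      intro y hy
      have hcont : ContinuousAt (fun t => y ⬝ᵥ (Zs t) *ᵥ y + δ * Real.exp (cc * t)) ts := by
        have h1 : ContinuousAt (fun t => (quadCLM y) (Zs t)) ts :=
          (quadCLM y).continuous.continuousAt.comp (hZscont ts hts0)
        exact (h1.add ((Real.continuous_exp.comp
          (continuous_const.mul continuous_id)).continuousAt.const_mul δ))
      have hevpos : ∀ᶠ t in nhdsWithin ts (Set.Iio ts),
          0 ≤ y ⬝ᵥ (Zs t) *ᵥ y + δ * Real.exp (cc * t) := by
        filter_upwards [Ioo_mem_nhdsLT_of_mem (show ts ∈ Set.Ioc 0 ts from ⟨htspos, le_refl ts⟩)]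
          with t ht
        exact (hlow t ht.1.le ht.2 y hy).le
      have htd : Filter.Tendsto (fun t => y ⬝ᵥ (Zs t) *ᵥ y + δ * Real.exp (cc * t))
          (nhdsWithin ts (Set.Iio ts)) (nhds (y ⬝ᵥ (Zs ts) *ᵥ y + δ * Real.exp (cc * ts))) :=
        hcont.tendsto.mono_left nhdsWithin_le_nhds
      have := ge_of_tendsto htd hevpos
      rw [hWquad, hy, mul_one]
      exact this
    have hWsym : Wᵀ = W := by
      rw [hWdef, transpose_add, hsym ts hts0, transpose_smul, transpose_one]
    have hWx0 : x ⬝ᵥ W *ᵥ x = 0 := by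
      have h1 : x ⬝ᵥ W *ᵥ x ≤ 0 := by rw [hWquad, hxunit, mul_one]; exact hgle
      exact le_antisymm h1 (hWpsd x)
    have hker : W *ᵥ x = 0 := psd_kernel hWpsd hWsym hWx0
    have hZx : (Zs ts) *ᵥ x = (-r) • x := by
      have h1 : W *ᵥ x = (Zs ts) *ᵥ x + r • x := by
        rw [hWdef, add_mulVec, smul_mulVec, one_mulVec]
      rw [h1] at hker
      have := eq_neg_of_add_eq_zero_left hker
      rw [this, neg_smul]
    -- Step D: derivative and its positivity
    have hf1 : HasDerivAt (fun t => x ⬝ᵥ (Zs t) *ᵥ x)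
        (x ⬝ᵥ (lyapLc A N c' (Zs ts)) *ᵥ x) ts := by
      exact HasDerivAt.clmComp (quadCLM x) (hZsode ts hts0)
    have hf2 : HasDerivAt (fun t => δ * Real.exp (cc * t))
        (δ * (Real.exp (cc * ts) * cc)) ts := by
      have h1 : HasDerivAt (fun t : ℝ => cc * t) cc ts := by
        simpa using (hasDerivAt_id ts).const_mul cc
      exact (h1.exp).const_mul δ
    have hfd := hf1.add hf2
    set d := x ⬝ᵥ (lyapLc A N c' (Zs ts)) *ᵥ x + δ * (Real.exp (cc * ts) * cc) with hddef
    have hd : 0 < d := by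
      have hexpand : x ⬝ᵥ (lyapLc A N c' (Zs ts)) *ᵥ x
          = x ⬝ᵥ (Aᵀ * Zs ts) *ᵥ x + x ⬝ᵥ (Zs ts * A) *ᵥ x
            + c' * ∑ k, x ⬝ᵥ ((N k)ᵀ * Zs ts * N k) *ᵥ x := by
        rw [lyapLc_apply, add_mulVec, add_mulVec, dotProduct_add, dotProduct_add,
          smul_mulVec, dotProduct_smul, smul_eq_mul, sum_mulVec', dotProduct_sum']
      have ht1 : x ⬝ᵥ (Aᵀ * Zs ts) *ᵥ x = -r * (x ⬝ᵥ Aᵀ *ᵥ x) := by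
        rw [← mulVec_mulVec, hZx, mulVec_smul, dotProduct_smul, smul_eq_mul]
      have ht2 : x ⬝ᵥ (Zs ts * A) *ᵥ x = -r * (x ⬝ᵥ A *ᵥ x) := by
        rw [← mulVec_mulVec, dotProduct_mulVec x (Zs ts), ← mulVec_transpose,
          hsym ts hts0, hZx, smul_dotProduct, smul_eq_mul, dotProduct_mulVec]
      have ht3 : ∀ k, x ⬝ᵥ ((N k)ᵀ * Zs ts * N k) *ᵥ x
          = (N k *ᵥ x) ⬝ᵥ (Zs ts) *ᵥ (N k *ᵥ x) := by
        intro k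
        rw [← mulVec_mulVec, ← mulVec_mulVec, dot_transpose_mulVec]
      have hb1 : x ⬝ᵥ Aᵀ *ᵥ x ≤ cA1 := le_of_abs_le (abs_quad_le Aᵀ hxabs)
      have hb2 : x ⬝ᵥ A *ᵥ x ≤ cA2 := le_of_abs_le (abs_quad_le A hxabs)
      have hb3 : ∀ k, -r * (∑ i, (∑ j, |(N k) i j|)^2) ≤ (N k *ᵥ x) ⬝ᵥ (Zs ts) *ᵥ (N k *ᵥ x) := by
        intro k
        have h1 := hWpsd (N k *ᵥ x)
        rw [hWquad] at h1
        have h2 : (N k *ᵥ x) ⬝ᵥ (N k *ᵥ x) ≤ ∑ i, (∑ j, |(N k) i j|)^2 :=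
          mulVec_dot_self_le (N k) hxabs
        have h3 := mul_le_mul_of_nonpos_left h2 (show -r ≤ 0 by linarith)
        linarith
      have hsum3 : -r * cN ≤ ∑ k, (N k *ᵥ x) ⬝ᵥ (Zs ts) *ᵥ (N k *ᵥ x) := by
        rw [hcNdef, Finset.mul_sum]
        exact Finset.sum_le_sum fun k _ => hb3 k
      have hq : -r * cA1 - r * cA2 + c' * (-r * cN)
          ≤ x ⬝ᵥ (lyapLc A N c' (Zs ts)) *ᵥ x := by
        rw [hexpand, ht1, ht2]
        have h3 : c' * (-r * cN) ≤ c' * ∑ k, x ⬝ᵥ ((N k)ᵀ * Zs ts * N k) *ᵥ x := by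
          apply mul_le_mul_of_nonneg_left _ hc'.le
          calc -r * cN ≤ ∑ k, (N k *ᵥ x) ⬝ᵥ (Zs ts) *ᵥ (N k *ᵥ x) := hsum3
            _ = ∑ k, x ⬝ᵥ ((N k)ᵀ * Zs ts * N k) *ᵥ x := by
                exact Finset.sum_congr rfl fun k _ => (ht3 k).symm
        have h1 : -r * cA1 ≤ -r * (x ⬝ᵥ Aᵀ *ᵥ x) :=
          mul_le_mul_of_nonpos_left hb1 (show -r ≤ 0 by linarith)
        have h2 : -r * cA2 ≤ -r * (x ⬝ᵥ A *ᵥ x) :=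
          mul_le_mul_of_nonpos_left hb2 (show -r ≤ 0 by linarith)
        linarith
      have hrc : δ * (Real.exp (cc * ts) * cc) = r * cc := by rw [hrdef]; ring
      have hcceq : r * cc = r + r * cA1 + r * cA2 + c' * (r * cN) := by
        rw [hccdef]; ring
      have hneg : c' * (-r * cN) = -(c' * (r * cN)) := by ring
      rw [hddef, hrc]
      linarith [hq, hneg ▸ hq]
    -- Step E: slope contradiction
    have hfts0 : x ⬝ᵥ (Zs ts) *ᵥ x + δ * Real.exp (cc * ts) = 0 := by
      rw [← hrdef]
      have := hWx0
      rw [hWquad, hxunit, mul_one] at this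
      exact this
    have hslope := hasDerivAt_iff_tendsto_slope.mp hfd
    have hslope' := hslope.mono_left
      (nhdsWithin_mono ts (fun y (hy : y ∈ Set.Iio ts) => ne_of_lt hy))
    have hev1 := hslope'.eventually (eventually_gt_nhds hd)
    have hev2 := Ioo_mem_nhdsLT_of_mem (show ts ∈ Set.Ioc 0 ts from ⟨htspos, le_refl ts⟩)
    obtain ⟨t, hslopet, htIoo⟩ := (hev1.and (Filter.eventually_mem_set.mpr hev2)).exists
    have hft : 0 < x ⬝ᵥ (Zs t) *ᵥ x + δ * Real.exp (cc * t) :=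
      hlow t htIoo.1.le htIoo.2 x hxunit
    have hslopeval : slope (fun t => x ⬝ᵥ (Zs t) *ᵥ x + δ * Real.exp (cc * t)) ts t < 0 := by
      rw [slope_def_field, hfts0, sub_zero]
      exact div_neg_of_pos_of_neg hft (by linarith [htIoo.2])
    exact (lt_asymm hslopet hslopeval).elim
  -- conclude
  intro t ht
  apply quad_nonneg_of_unit
  intro x hx
  by_contra hneg
  push_neg at hneg
  set a := x ⬝ᵥ (Zs t) *ᵥ x with hadef
  have hexp : 0 < Real.exp (cc * t) := Real.exp_pos _
  have hδ : 0 < -a / (2 * Real.exp (cc * t)) := by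
    apply div_pos (by linarith) (by linarith)
  have := main t ht _ hδ t ⟨ht, le_refl t⟩ x hx
  have heq : -a / (2 * Real.exp (cc * t)) * Real.exp (cc * t) = -a / 2 := by
    field_simp
  rw [heq] at this
  linarith

lemma limit_zero_of_integrableOn {E : Type*} [NormedAddCommGroup E]
    {f : ℝ → E} {L : E} (hf : IntegrableOn f (Set.Ioi 0))
    (hl : Filter.Tendsto f Filter.atTop (nhds L)) : L = 0 := by
  by_contra hL
  have hLpos : 0 < ‖L‖ := norm_pos_iff.mpr hL
  have hev : ∀ᶠ t in Filter.atTop, ‖L‖/2 ≤ ‖f t‖ := by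
    filter_upwards [hl.eventually (Metric.ball_mem_nhds L (by linarith : (0:ℝ) < ‖L‖/2))]
      with t ht
    have := mem_ball_iff_norm.mp ht
    have h2 := norm_sub_norm_le L (f t)
    rw [norm_sub_rev] at h2
    linarith
  obtain ⟨T₀, hT₀⟩ := (hev.and (Filter.eventually_ge_atTop (1:ℝ))).exists_forall_of_atTop
  have hT₀1 : (1:ℝ) ≤ T₀ := (hT₀ T₀ le_rfl).2
  have hsub : Set.Ioi T₀ ⊆ Set.Ioi (0:ℝ) := Set.Ioi_subset_Ioi (by linarith)
  have hfi : IntegrableOn f (Set.Ioi T₀) := hf.mono_set hsub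
  have hconst : IntegrableOn (fun _ : ℝ => ‖L‖/2) (Set.Ioi T₀) := by
    apply Integrable.mono hfi.norm aestronglyMeasurable_const
    rw [ae_restrict_iff' measurableSet_Ioi]
    apply Filter.Eventually.of_forall
    intro t ht
    rw [Real.norm_eq_abs, Real.norm_eq_abs, abs_of_nonneg (by positivity),
      abs_of_nonneg (norm_nonneg _)]
    exact (hT₀ t (by linarith [Set.mem_Ioi.mp ht])).1
  rcases integrable_const_iff.mp hconst with h | h
  · have : ‖L‖/2 ≠ 0 := by positivity
    exact this h
  · haveI := h
    have h' : volume.restrict (Set.Ioi T₀) Set.univ < ⊤ := measure_lt_top _ _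
    rw [Measure.restrict_apply_univ, Real.volume_Ioi] at h'
    exact (lt_irrefl _ h').elim

lemma lyap_eq (A : Matrix (Fin n) (Fin n) ℝ) (N : Fin m → Matrix (Fin n) (Fin n) ℝ)
    (c' : ℝ) (Zs : ℝ → Matrix (Fin n) (Fin n) ℝ)
    (hZsode : ∀ t, 0 ≤ t → HasDerivAt Zs (lyapLc A N c' (Zs t)) t)
    (hZsint : @IntegrableOn _ _ _ UniformSpace.toTopologicalSpace
      SeminormedAddGroup.toContinuousENorm Zs (Set.Ioi 0) volume) :
    lyapLc A N c' (∫ s in Set.Ioi (0:ℝ), Zs s) = - Zs 0 := by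
  have hLint : @IntegrableOn _ _ _ UniformSpace.toTopologicalSpace
      SeminormedAddGroup.toContinuousENorm (fun s => lyapLc A N c' (Zs s)) (Set.Ioi 0) volume :=
    (lyapLc A N c').integrable_comp hZsint
  have hcomm : (∫ s in Set.Ioi (0:ℝ), lyapLc A N c' (Zs s))
      = lyapLc A N c' (∫ s in Set.Ioi (0:ℝ), Zs s) :=
    ContinuousLinearMap.integral_comp_comm _ hZsint
  have hftc : ∀ T, 0 ≤ T → (∫ s in (0:ℝ)..T, lyapLc A N c' (Zs s)) = Zs T - Zs 0 := by
    intro T hT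
    apply intervalIntegral.integral_eq_sub_of_hasDerivAt
    · intro t ht
      rw [Set.uIcc_of_le hT] at ht
      exact hZsode t ht.1
    · apply ContinuousOn.intervalIntegrable
      apply (lyapLc A N c').continuous.comp_continuousOn
      apply continuousOn_of_forall_continuousAt
      intro t ht
      rw [Set.uIcc_of_le hT] at ht
      exact (hZsode t ht.1).continuousAt
  have htint : Filter.Tendsto (fun T => ∫ s in (0:ℝ)..T, lyapLc A N c' (Zs s))
      Filter.atTop (nhds (∫ s in Set.Ioi (0:ℝ), lyapLc A N c' (Zs s))) :=
    intervalIntegral_tendsto_integral_Ioi 0 hLint Filter.tendsto_id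
  have hZtend : Filter.Tendsto Zs Filter.atTop
      (nhds (Zs 0 + ∫ s in Set.Ioi (0:ℝ), lyapLc A N c' (Zs s))) := by
    have h1 : Filter.Tendsto (fun T => Zs 0 + ∫ s in (0:ℝ)..T, lyapLc A N c' (Zs s))
        Filter.atTop (nhds (Zs 0 + ∫ s in Set.Ioi (0:ℝ), lyapLc A N c' (Zs s))) :=
      htint.const_add _
    apply h1.congr'
    filter_upwards [Filter.eventually_ge_atTop (0:ℝ)] with T hT
    rw [hftc T hT]
    abel
  have hzero : Zs 0 + (∫ s in Set.Ioi (0:ℝ), lyapLc A N c' (Zs s)) = 0 :=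
    limit_zero_of_integrableOn hZsint hZtend
  rw [hcomm] at hzero
  linear_combination (norm := module) hzero

lemma sum_dotProduct' {ι : Type*} (s : Finset ι) (v : ι → Fin n → ℝ) (x : Fin n → ℝ) :
    (∑ k ∈ s, v k) ⬝ᵥ x = ∑ k ∈ s, (v k) ⬝ᵥ x := by
  simp only [dotProduct, Finset.sum_apply, Finset.sum_mul]
  rw [Finset.sum_comm]

/-- `M ↦ M *ᵥ q` as a continuous linear map. -/
noncomputable def mvCLM (q : Fin n → ℝ) :
    Matrix (Fin n) (Fin n) ℝ →L[ℝ] (Fin n → ℝ) :=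
  LinearMap.toContinuousLinearMap
  { toFun := fun M => M *ᵥ q
    map_add' := fun M₁ M₂ => by rw [add_mulVec]
    map_smul' := fun r M => by simp only [RingHom.id_apply]; rw [smul_mulVec] }

@[simp] lemma mvCLM_apply (q : Fin n → ℝ) (M : Matrix (Fin n) (Fin n) ℝ) :
    mvCLM q M = M *ᵥ q := rfl

/-- `v ↦ Q *ᵥ v` as a continuous linear map. -/
noncomputable def mvlCLM (Q : Matrix (Fin n) (Fin n) ℝ) :
    (Fin n → ℝ) →L[ℝ] (Fin n → ℝ) :=
  LinearMap.toContinuousLinearMap Q.mulVecLin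

@[simp] lemma mvlCLM_apply (Q : Matrix (Fin n) (Fin n) ℝ) (v : Fin n → ℝ) :
    mvlCLM Q v = Q *ᵥ v := rfl

lemma hasDerivAt_dot {f g : ℝ → Fin n → ℝ} {f' g' : Fin n → ℝ} {t : ℝ}
    (hf : HasDerivAt f f' t) (hg : HasDerivAt g g' t) :
    HasDerivAt (fun s => f s ⬝ᵥ g s) (f' ⬝ᵥ g t + f t ⬝ᵥ g') t := by
  have h : ∀ i : Fin n, HasDerivAt (fun s => f s i * g s i)
      (f' i * g t i + f t i * g' i) t := by
    intro i
    exact (HasDerivAt.clmComp (ContinuousLinearMap.proj i) hf).mul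
      (HasDerivAt.clmComp (ContinuousLinearMap.proj i) hg)
  have := HasDerivAt.sum (u := Finset.univ) (fun i _ => h i)
  simp only [dotProduct]
  convert this using 1
  · rfl
  · rfl
  · funext s; rw [Finset.sum_apply]
  rw [← Finset.sum_add_distrib]

lemma continuous_rho_aux {p' : ℕ} (C : Matrix (Fin p') (Fin n) ℝ) (qv : Fin n → ℝ) :
    Continuous fun M : Matrix (Fin n) (Fin n) ℝ => ∑ i, (((C * M) *ᵥ qv) i)^2 := by
  apply continuous_finset_sum; intro i _
  apply Continuous.pow
  simp only [mulVec, dotProduct, Matrix.mul_apply]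
  apply continuous_finset_sum; intro j _
  apply Continuous.mul _ continuous_const
  apply continuous_finset_sum; intro l _
  exact continuous_const.mul (continuous_apply_apply l j)


/-- Proposition 3.2: any unit eigenvector `q` of the observability Gramian
`Q = ∫₀^∞ Z*_γ(s, CᵀC) ds` with eigenvalue `μ` satisfies, for every `t₀ ≥ 0`,
`(∫_{t₀}^∞ ‖C Φ(t,t₀) q‖₂² dt)^{1/2} ≤ μ^{1/2} exp{0.5 ‖γ u⁰‖²_{L²}}`. -/
theorem dominant_subspace_estimate_Q
    {n p m : ℕ}
    (A : Matrix (Fin n) (Fin n) ℝ) (N : Fin m → Matrix (Fin n) (Fin n) ℝ)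
    (C : Matrix (Fin p) (Fin n) ℝ)
    (γ : ℝ) (hγ : 0 < γ)
    (hstab : ∀ μ ∈ spectrum ℂ
      (((1 : Matrix (Fin n) (Fin n) ℝ) ⊗ₖ A + A ⊗ₖ (1 : Matrix (Fin n) (Fin n) ℝ)
        + (γ ^ 2)⁻¹ • ∑ k, N k ⊗ₖ N k).map (Complex.ofReal : ℝ → ℂ)), μ.re < 0)
    (u : ℝ → Fin m → ℝ) (hu : Continuous u)
    (huL2 : IntegrableOn (fun s => ∑ k, (u s k) ^ 2) (Set.Ioi 0))
    -- `Φ` is the fundamental solution of the bilinear system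
    (Φ : ℝ → ℝ → Matrix (Fin n) (Fin n) ℝ)
    (hΦinit : ∀ s, 0 ≤ s → Φ s s = 1)
    (hΦode : ∀ s, 0 ≤ s → ∀ t, s ≤ t →
      HasDerivAt (fun τ => Φ τ s) (A * Φ t s + ∑ k, u t k • (N k * Φ t s)) t)
    -- `Zs = Z*_γ(·, CᵀC)` solves the adjoint generalized Lyapunov matrix ODE,
    -- and `Q = ∫₀^∞ Zs(s) ds`
    (Zs : ℝ → Matrix (Fin n) (Fin n) ℝ)
    (hZs0 : Zs 0 = Cᵀ * C)
    (hZsode : ∀ t, 0 ≤ t →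
      HasDerivAt Zs (Aᵀ * Zs t + Zs t * A + (γ ^ 2)⁻¹ • ∑ k, (N k)ᵀ * Zs t * N k) t)
    (hZsint : @IntegrableOn _ _ _ UniformSpace.toTopologicalSpace
      SeminormedAddGroup.toContinuousENorm Zs (Set.Ioi 0) volume)
    -- `qv` is a unit eigenvector of `Q` with eigenvalue `μ ≥ 0`
    (qv : Fin n → ℝ) (hq : ∑ i, qv i ^ 2 = 1)
    (μ : ℝ) (hμ : 0 ≤ μ)
    (heig : (∫ s in Set.Ioi (0 : ℝ), Zs s).mulVec qv = μ • qv)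
    (t₀ : ℝ) (ht₀ : 0 ≤ t₀) :
    Real.sqrt (∫ t in Set.Ioi t₀, ∑ i, ((C * Φ t t₀).mulVec qv i) ^ 2)
      ≤ Real.sqrt μ
        * Real.exp (0.5 * ∫ v in Set.Ioi (0 : ℝ),
            ∑ k, (γ * (if N k = 0 then (0 : ℝ) else u v k)) ^ 2) := by
  have hc' : (0:ℝ) < (γ^2)⁻¹ := by positivity
  have hZsode' : ∀ t, 0 ≤ t → HasDerivAt Zs (lyapLc A N (γ^2)⁻¹ (Zs t)) t := by
    intro t ht; simpa using hZsode t ht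
  have hsym : ∀ t, 0 ≤ t → (Zs t)ᵀ = Zs t := by
    apply Zs_symm A N (γ^2)⁻¹ Zs _ hZsode'
    rw [hZs0, transpose_mul, transpose_transpose]
  have hpsd0 : ∀ y, 0 ≤ y ⬝ᵥ (Zs 0) *ᵥ y := by
    intro y
    rw [hZs0, ← mulVec_mulVec, dot_transpose_mulVec]
    exact dot_self_nonneg _
  have hZpsd : ∀ t, 0 ≤ t → ∀ y, 0 ≤ y ⬝ᵥ (Zs t) *ᵥ y :=
    Zs_psd A N hc' Zs hpsd0 hZsode' hsym
  set Q : Matrix (Fin n) (Fin n) ℝ := ∫ s in Set.Ioi (0:ℝ), Zs s with hQdef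
  have hQsym : Qᵀ = Q := by
    have h1 : Qᵀ = transposeCLM Q := rfl
    rw [h1, hQdef]
    refine (ContinuousLinearMap.integral_comp_comm transposeCLM hZsint).symm.trans ?_
    exact setIntegral_congr_fun measurableSet_Ioi fun s hs => hsym s (le_of_lt hs)
  have hQpsd : ∀ y, 0 ≤ y ⬝ᵥ Q *ᵥ y := by
    intro y
    have h1 : y ⬝ᵥ Q *ᵥ y = quadCLM y Q := rfl
    rw [h1, hQdef]
    refine le_of_le_of_eq ?_ (ContinuousLinearMap.integral_comp_comm (quadCLM y) hZsint)
    exact setIntegral_nonneg measurableSet_Ioi fun s hs => hZpsd s (le_of_lt hs) y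
  have hlyap : lyapLc A N (γ^2)⁻¹ Q = -(Cᵀ * C) := by
    rw [hQdef, lyap_eq A N (γ^2)⁻¹ Zs hZsode' hZsint, hZs0]
  -- the control-energy integrand
  set h : ℝ → ℝ := fun v => ∑ k, (γ * (if N k = 0 then (0:ℝ) else u v k))^2 with hhdef
  have hcont : Continuous h := by
    apply continuous_finset_sum
    intro k _
    apply Continuous.pow
    apply Continuous.mul continuous_const
    by_cases hNk : N k = 0
    · simp only [hNk, if_true]
      exact continuous_const
    · simp only [hNk, if_false]
      exact (continuous_apply k).comp hu
  have hnonneg : ∀ v, 0 ≤ h v := fun v => Finset.sum_nonneg fun k _ => sq_nonneg _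
  have hint : IntegrableOn h (Set.Ioi 0) := by
    apply Integrable.mono (huL2.const_mul (γ^2)) hcont.aestronglyMeasurable
    apply Filter.Eventually.of_forall
    intro v
    have hnn2 : (0:ℝ) ≤ γ^2 * ∑ k, (u v k)^2 := by positivity
    rw [Real.norm_eq_abs, Real.norm_eq_abs, abs_of_nonneg (hnonneg v), abs_of_nonneg hnn2]
    rw [hhdef, Finset.mul_sum]
    refine Finset.sum_le_sum fun k _ => ?_
    by_cases hNk : N k = 0
    · simp only [hNk, if_true]
      have : (γ * 0)^2 = 0 := by ring
      rw [this]
      positivity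
    · simp only [hNk, if_false]
      rw [mul_pow]
  set H : ℝ := ∫ v in Set.Ioi (0:ℝ), h v with hHdef
  have hH0 : 0 ≤ H := setIntegral_nonneg measurableSet_Ioi fun v _ => hnonneg v
  -- the trajectory
  set w : ℝ → Fin n → ℝ := fun t => (Φ t t₀) *ᵥ qv with hwdef
  have hw0 : w t₀ = qv := by rw [hwdef]; simp only [hΦinit t₀ ht₀, one_mulVec]
  have hw' : ∀ t, t₀ ≤ t →
      HasDerivAt w ((A *ᵥ w t) + ∑ k, u t k • (N k *ᵥ w t)) t := by
    intro t htt
    have h1 := HasDerivAt.clmComp (mvCLM qv) (hΦode t₀ ht₀ t htt)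
    change HasDerivAt (fun s => Φ s t₀ *ᵥ qv) ((A * Φ t t₀ + ∑ k, u t k • (N k * Φ t t₀)) *ᵥ qv) t at h1
    convert h1 using 1
    rw [add_mulVec, sum_mulVec']
    congr 1
    · rw [mulVec_mulVec]
    · refine Finset.sum_congr rfl fun k _ => ?_
      rw [smul_mulVec, mulVec_mulVec]
  -- the output energy
  set ρ : ℝ → ℝ := fun t => ∑ i, (((C * Φ t t₀) *ᵥ qv) i)^2 with hρdef
  have hρeq : ∀ t, ρ t = w t ⬝ᵥ (Cᵀ * C) *ᵥ (w t) := by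
    intro t
    have h2 : ρ t = ((C * Φ t t₀) *ᵥ qv) ⬝ᵥ ((C * Φ t t₀) *ᵥ qv) := by
      rw [hρdef]; simp only [dotProduct, sq]
    rw [h2, ← mulVec_mulVec, ← mulVec_mulVec (w t) Cᵀ C]
    rw [dot_transpose_mulVec]
  have hρnonneg : ∀ t, 0 ≤ ρ t := fun t => Finset.sum_nonneg fun i _ => sq_nonneg _
  have hρcontAt : ∀ t, t₀ ≤ t → ContinuousAt ρ t := by
    intro t htt
    have hΦc : ContinuousAt (fun τ => Φ τ t₀) t := (hΦode t₀ ht₀ t htt).continuousAt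
    exact (continuous_rho_aux C qv).continuousAt.comp hΦc
  have hρcontOn : ContinuousOn ρ (Set.Ici t₀) :=
    continuousOn_of_forall_continuousAt fun t ht => hρcontAt t ht
  -- F and its derivative
  set F : ℝ → ℝ := fun t => w t ⬝ᵥ Q *ᵥ (w t) with hFdef
  set w' : ℝ → Fin n → ℝ := fun t => (A *ᵥ w t) + ∑ k, u t k • (N k *ᵥ w t) with hw'def
  have hFderiv : ∀ t, t₀ ≤ t →
      HasDerivAt F (w' t ⬝ᵥ Q *ᵥ w t + w t ⬝ᵥ Q *ᵥ w' t) t := by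
    intro t htt
    have h1 := hw' t htt
    have h2 : HasDerivAt (fun s => Q *ᵥ w s) (Q *ᵥ w' t) t := by
      have := HasDerivAt.clmComp (mvlCLM Q) h1
      simpa using this
    exact hasDerivAt_dot h1 h2
  -- the key differential inequality
  have hFle : ∀ t, t₀ ≤ t →
      w' t ⬝ᵥ Q *ᵥ w t + w t ⬝ᵥ Q *ᵥ w' t ≤ -ρ t + h t * F t := by
    intro t htt
    set wt := w t with hwtdef
    have e1 : w t ⬝ᵥ Q *ᵥ w' t = w' t ⬝ᵥ Q *ᵥ wt := quad_symm' hQsym _ _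
    have e2 : w' t ⬝ᵥ Q *ᵥ wt = (A *ᵥ wt) ⬝ᵥ Q *ᵥ wt
        + ∑ k, u t k * ((N k *ᵥ wt) ⬝ᵥ Q *ᵥ wt) := by
      rw [hw'def]
      rw [add_dotProduct, sum_dotProduct']
      congr 1
      refine Finset.sum_congr rfl fun k _ => ?_
      rw [smul_dotProduct, smul_eq_mul]
    have hlyapvec : wt ⬝ᵥ (lyapLc A N (γ^2)⁻¹ Q) *ᵥ wt = -(ρ t) := by
      rw [hlyap, neg_mulVec, dotProduct_neg, hρeq t]
    have hexpand : wt ⬝ᵥ (lyapLc A N (γ^2)⁻¹ Q) *ᵥ wt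
        = wt ⬝ᵥ (Aᵀ * Q) *ᵥ wt + wt ⬝ᵥ (Q * A) *ᵥ wt
          + (γ^2)⁻¹ * ∑ k, wt ⬝ᵥ ((N k)ᵀ * Q * N k) *ᵥ wt := by
      rw [lyapLc_apply, add_mulVec, add_mulVec, dotProduct_add, dotProduct_add,
        smul_mulVec, dotProduct_smul, smul_eq_mul, sum_mulVec', dotProduct_sum']
    have id1 : wt ⬝ᵥ (Aᵀ * Q) *ᵥ wt = (A *ᵥ wt) ⬝ᵥ Q *ᵥ wt := by
      rw [← mulVec_mulVec, dot_transpose_mulVec]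
    have id2 : wt ⬝ᵥ (Q * A) *ᵥ wt = (A *ᵥ wt) ⬝ᵥ Q *ᵥ wt := by
      rw [← mulVec_mulVec, quad_symm' hQsym]
    have id3 : ∀ k, wt ⬝ᵥ ((N k)ᵀ * Q * N k) *ᵥ wt
        = (N k *ᵥ wt) ⬝ᵥ Q *ᵥ (N k *ᵥ wt) := by
      intro k
      rw [← mulVec_mulVec, ← mulVec_mulVec, dot_transpose_mulVec]
    have hkey : 2 * ((A *ᵥ wt) ⬝ᵥ Q *ᵥ wt)
        = -(ρ t) - (γ^2)⁻¹ * ∑ k, (N k *ᵥ wt) ⬝ᵥ Q *ᵥ (N k *ᵥ wt) := by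
      have := hlyapvec
      rw [hexpand, id1, id2] at this
      have hs : (∑ k, wt ⬝ᵥ ((N k)ᵀ * Q * N k) *ᵥ wt)
          = ∑ k, (N k *ᵥ wt) ⬝ᵥ Q *ᵥ (N k *ᵥ wt) :=
        Finset.sum_congr rfl fun k _ => id3 k
      rw [hs] at this
      linarith
    have hterm : ∀ k, 2 * (u t k * ((N k *ᵥ wt) ⬝ᵥ Q *ᵥ wt))
        - (γ^2)⁻¹ * ((N k *ᵥ wt) ⬝ᵥ Q *ᵥ (N k *ᵥ wt))
        ≤ (γ * (if N k = 0 then (0:ℝ) else u t k))^2 * F t := by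
      intro k
      by_cases hNk : N k = 0
      · simp only [hNk, if_true, zero_mulVec, zero_dotProduct]
        have : (γ * (0:ℝ))^2 = 0 := by ring
        rw [this]
        simp
      · simp only [hNk, if_false]
        have hcs := complete_square hQpsd hQsym (N k *ᵥ wt) wt (u t k) γ (ne_of_gt hγ)
        have hFwt : F t = wt ⬝ᵥ Q *ᵥ wt := rfl
        rw [hFwt]
        nlinarith [hcs]
    have hsum : ∑ k, (2 * (u t k * ((N k *ᵥ wt) ⬝ᵥ Q *ᵥ wt))
          - (γ^2)⁻¹ * ((N k *ᵥ wt) ⬝ᵥ Q *ᵥ (N k *ᵥ wt)))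
        ≤ (∑ k, (γ * (if N k = 0 then (0:ℝ) else u t k))^2) * F t := by
      rw [Finset.sum_mul]
      exact Finset.sum_le_sum fun k _ => hterm k
    have hsplit : ∑ k, (2 * (u t k * ((N k *ᵥ wt) ⬝ᵥ Q *ᵥ wt))
          - (γ^2)⁻¹ * ((N k *ᵥ wt) ⬝ᵥ Q *ᵥ (N k *ᵥ wt)))
        = 2 * (∑ k, u t k * ((N k *ᵥ wt) ⬝ᵥ Q *ᵥ wt))
          - (γ^2)⁻¹ * ∑ k, (N k *ᵥ wt) ⬝ᵥ Q *ᵥ (N k *ᵥ wt) := by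
      rw [Finset.sum_sub_distrib, Finset.mul_sum, Finset.mul_sum]
    have hht : h t = ∑ k, (γ * (if N k = 0 then (0:ℝ) else u t k))^2 := rfl
    rw [e1, e2, hht]
    linarith [hsum, hsplit ▸ hsum, hkey]
  -- the accumulated control energy
  set Efun : ℝ → ℝ := fun t => ∫ s in t₀..t, h s with hEdef
  have hE' : ∀ t : ℝ, HasDerivAt Efun (h t) t := by
    intro t
    exact intervalIntegral.integral_hasDerivAt_right (hcont.intervalIntegrable t₀ t)
      ⟨Set.univ, Filter.univ_mem, hcont.aestronglyMeasurable⟩ hcont.continuousAt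
  have hEleH : ∀ t, t₀ ≤ t → Efun t ≤ H := by
    intro t htt
    rw [hEdef]
    simp only []
    rw [intervalIntegral.integral_of_le htt, hHdef]
    apply setIntegral_mono_set hint (Filter.Eventually.of_forall fun v => hnonneg v)
    exact (show Set.Ioc t₀ t ⊆ Set.Ioi 0 from fun s hs => lt_of_le_of_lt ht₀ hs.1).eventuallyLE
  have hFt0 : F t₀ = μ := by
    have hqq : qv ⬝ᵥ qv = 1 := by
      rw [show qv ⬝ᵥ qv = ∑ i, qv i ^ 2 from by simp [dotProduct, sq], hq]
    rw [hFdef]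
    simp only [hw0]
    rw [heig, dotProduct_smul, smul_eq_mul, hqq, mul_one]
  have hbound : ∀ T, t₀ ≤ T → (∫ s in t₀..T, ρ s) ≤ μ * Real.exp H := by
    intro T hTT
    set J : ℝ → ℝ := fun t => F t * Real.exp (-(Efun t))
      + Real.exp (-H) * (∫ s in t₀..t, ρ s) with hJdef
    have hρIcc : IntegrableOn ρ (Set.Icc t₀ T) :=
      (hρcontOn.mono Set.Icc_subset_Ici_self).integrableOn_compact isCompact_Icc
    have hRcont : ContinuousOn (fun t => ∫ s in t₀..t, ρ s) (Set.Icc t₀ T) := by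
      apply (intervalIntegral.continuousOn_primitive hρIcc).congr
      intro t ht
      exact intervalIntegral.integral_of_le ht.1
    have hJcont : ContinuousOn J (Set.Icc t₀ T) := by
      apply ContinuousOn.add
      · apply ContinuousOn.mul
        · exact continuousOn_of_forall_continuousAt fun t ht => (hFderiv t ht.1).continuousAt
        · exact (Real.continuous_exp.comp (continuous_neg.comp
            (continuous_iff_continuousAt.mpr fun t => (hE' t).continuousAt))).continuousOn
      · exact continuousOn_const.mul hRcont
    have hJderiv : ∀ t ∈ Set.Ioo t₀ T, HasDerivAt J
        ((w' t ⬝ᵥ Q *ᵥ w t + w t ⬝ᵥ Q *ᵥ w' t) * Real.exp (-(Efun t))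
          + F t * (Real.exp (-(Efun t)) * -(h t))
          + Real.exp (-H) * ρ t) t := by
      intro t ht
      have hFd := hFderiv t ht.1.le
      have hexpd : HasDerivAt (fun s => Real.exp (-(Efun s)))
          (Real.exp (-(Efun t)) * -(h t)) t := ((hE' t).neg).exp
      have hRd : HasDerivAt (fun s => ∫ τ in t₀..s, ρ τ) (ρ t) t := by
        apply intervalIntegral.integral_hasDerivAt_right
        · apply ContinuousOn.intervalIntegrable
          apply hρcontOn.mono
          rw [Set.uIcc_of_le ht.1.le]
          exact Set.Icc_subset_Ici_self
        · exact ⟨Set.Ioi t₀, Ioi_mem_nhds ht.1,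
            (hρcontOn.mono fun s hs => le_of_lt hs).aestronglyMeasurable measurableSet_Ioi⟩
        · exact hρcontAt t ht.1.le
      exact (hFd.mul hexpd).add (hRd.const_mul _)
    have hderivle : ∀ t ∈ Set.Ioo t₀ T,
        (w' t ⬝ᵥ Q *ᵥ w t + w t ⬝ᵥ Q *ᵥ w' t) * Real.exp (-(Efun t))
          + F t * (Real.exp (-(Efun t)) * -(h t))
          + Real.exp (-H) * ρ t ≤ 0 := by
      intro t ht
      have he : Real.exp (-H) ≤ Real.exp (-(Efun t)) :=
        Real.exp_le_exp.mpr (neg_le_neg (hEleH t ht.1.le))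
      have epos : (0:ℝ) < Real.exp (-(Efun t)) := Real.exp_pos _
      have h1 : (w' t ⬝ᵥ Q *ᵥ w t + w t ⬝ᵥ Q *ᵥ w' t) * Real.exp (-(Efun t))
          ≤ (-ρ t + h t * F t) * Real.exp (-(Efun t)) :=
        mul_le_mul_of_nonneg_right (hFle t ht.1.le) epos.le
      have h2 : Real.exp (-H) * ρ t ≤ Real.exp (-(Efun t)) * ρ t :=
        mul_le_mul_of_nonneg_right he (hρnonneg t)
      nlinarith [h1, h2]
    have hanti : AntitoneOn J (Set.Icc t₀ T) := by
      apply antitoneOn_of_deriv_nonpos (convex_Icc t₀ T) hJcont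
      · rw [interior_Icc]
        exact fun t ht => (hJderiv t ht).differentiableAt.differentiableWithinAt
      · rw [interior_Icc]
        intro t ht
        rw [(hJderiv t ht).deriv]
        exact hderivle t ht
    have hJT : J T ≤ J t₀ :=
      hanti ⟨le_refl t₀, hTT⟩ ⟨hTT, le_refl T⟩ hTT
    have hJt0 : J t₀ = μ := by
      rw [hJdef]
      simp only [intervalIntegral.integral_same, mul_zero, add_zero]
      have hE0 : Efun t₀ = 0 := intervalIntegral.integral_same
      rw [hE0, neg_zero, Real.exp_zero, mul_one, hFt0]
    have hJTlb : Real.exp (-H) * (∫ s in t₀..T, ρ s) ≤ J T := by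
      have hJTeq : J T = F T * Real.exp (-(Efun T))
          + Real.exp (-H) * (∫ s in t₀..T, ρ s) := rfl
      rw [hJTeq]
      have hFT : 0 ≤ F T := hQpsd (w T)
      have : 0 ≤ F T * Real.exp (-(Efun T)) := mul_nonneg hFT (Real.exp_pos _).le
      linarith
    have hcomb : Real.exp (-H) * (∫ s in t₀..T, ρ s) ≤ μ := by
      rw [← hJt0]; exact le_trans hJTlb hJT
    rw [Real.exp_neg] at hcomb
    rw [inv_mul_le_iff₀ (Real.exp_pos H)] at hcomb
    calc (∫ s in t₀..T, ρ s) ≤ Real.exp H * μ := hcomb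
      _ = μ * Real.exp H := mul_comm _ _
  -- pass to the improper integral
  have htendb : Filter.Tendsto (fun i : ℕ => t₀ + (i:ℝ)) Filter.atTop Filter.atTop :=
    Filter.tendsto_atTop_add_const_left _ t₀ tendsto_natCast_atTop_atTop
  have hbineq : ∀ i : ℕ, (∫ s in t₀..(t₀ + (i:ℝ)), ‖ρ s‖) ≤ μ * Real.exp H := by
    intro i
    have heqn : Set.EqOn (fun s => ‖ρ s‖) ρ (Set.uIcc t₀ (t₀ + (i:ℝ))) := fun s _ => by
      show ‖ρ s‖ = ρ s
      rw [Real.norm_eq_abs, abs_of_nonneg (hρnonneg s)]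
    rw [intervalIntegral.integral_congr heqn]
    exact hbound _ (le_add_of_nonneg_right (Nat.cast_nonneg i))
  have hρIoi : IntegrableOn ρ (Set.Ioi t₀) := by
    apply integrableOn_Ioi_of_intervalIntegral_norm_bounded (μ * Real.exp H) t₀
      (fun i : ℕ => ?_) htendb (Filter.Eventually.of_forall hbineq)
    exact ((hρcontOn.mono Set.Icc_subset_Ici_self).integrableOn_compact
      isCompact_Icc).mono_set Set.Ioc_subset_Icc_self
  have htend2 := intervalIntegral_tendsto_integral_Ioi t₀ hρIoi htendb
  have hfin : (∫ t in Set.Ioi t₀, ρ t) ≤ μ * Real.exp H :=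
    le_of_tendsto htend2 (Filter.Eventually.of_forall fun i =>
      hbound _ (le_add_of_nonneg_right (Nat.cast_nonneg i)))
  calc Real.sqrt (∫ t in Set.Ioi t₀, ρ t) ≤ Real.sqrt (μ * Real.exp H) :=
        Real.sqrt_le_sqrt hfin
    _ = Real.sqrt μ * Real.sqrt (Real.exp H) := Real.sqrt_mul hμ _
    _ = Real.sqrt μ * Real.exp (0.5 * H) := by
        rw [show (0.5:ℝ) * H = H / 2 by ring, Real.exp_half]
end

section
/- Let 𝒜 ∈ ℝ^{n×n}, 𝒩_1,…,𝒩_m ∈ ℝ^{n×n} and 𝒞 ∈ ℝ^{p×n} be partitioned into blocks 𝒜 = [𝒜₁₁ 𝒜₁₂; 𝒜₂₁ 𝒜₂₂], 𝒩_k = [𝒩_{k,11} 𝒩_{k,12}; 𝒩_{k,21} 𝒩_{k,22}], 𝒞 = [𝒞₁ 𝒞₂] with 𝒜₁₁, 𝒩_{k,11} ∈ ℝ^{r×r}, let Θ = diag(Θ₁, Θ₂) be block-diagonal with symmetric positive semidefinite blocks, γ > 0, and suppose 𝒜 and 𝒜₂₂ are invertible and 𝒜^⊤ Θ + Θ 𝒜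 + γ^{-2} Σ_{k=1}^m 𝒩_k^⊤ Θ 𝒩_k = −𝒞^⊤ 𝒞. Define Ā = 𝒜₁₁ − 𝒜₁₂ 𝒜₂₂^{-1} 𝒜₂₁, C̄ = 𝒞₁ − 𝒞₂ 𝒜₂₂^{-1} 𝒜₂₁, N̄_k = 𝒩_{k,11} − 𝒩_{k,12} 𝒜₂₂^{-1} 𝒜₂₁ and N̄_{k,21} = 𝒩_{k,21} − 𝒩_{k,22} 𝒜₂₂^{-1} 𝒜₂₁. Then Ā^⊤ Θ₁ + Θ₁ Ā + γ^{-2} Σ_{k=1}^m N̄_k^⊤ Θ₁ N̄_k = −C̄^⊤ C̄ − γ^{-2} Σ_{k=1}^m N̄_{k,21}^⊤ Θ₂ N̄_{k,21}, and in particular Ā^⊤ Θ₁ + Θ₁ Ā + γ^{-2} Σ_{k=1}^m N̄_k^⊤ Θ₁ N̄_k ≤ −C̄^⊤ C̄ in the positive semidefinite order. -/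
open MeasureTheory Matrix
open scoped Classical

set_option linter.unusedVariables false

private lemma psd_add {n : Type*} [Fintype n] {A B : Matrix n n ℝ}
    (hA : A.PosSemidef) (hB : B.PosSemidef) : (A + B).PosSemidef := by
  exact hA.add hB

private lemma psd_sum {ι n : Type*} [Fintype n] (t : Finset ι) (f : ι → Matrix n n ℝ)
    (h : ∀ i ∈ t, (f i).PosSemidef) : (∑ i ∈ t, f i).PosSemidef :=
  Finset.sum_induction f _ (fun _ _ => psd_add) Matrix.PosSemidef.zero h

private lemma psd_smul {n : Type*} [Fintype n] {A : Matrix n n ℝ} {c : ℝ}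
    (hc : 0 ≤ c) (hA : A.PosSemidef) : (c • A).PosSemidef := by
  exact hA.smul hc


/-- SPA observability equation, cf. (A.6) in the paper: from the full
balanced observability equation one obtains
`Āᵀ Θ₁ + Θ₁ Ā + γ⁻² ∑ₖ N̄ₖᵀ Θ₁ N̄ₖ = −C̄ᵀ C̄ − γ⁻² ∑ₖ N̄_{k,21}ᵀ Θ₂ N̄_{k,21} ≤ −C̄ᵀ C̄`. -/
theorem spa_observability_equation
    {r s q p m : ℕ} (γ : ℝ) (hγ : 0 < γ)
    (A11 : Matrix (Fin r) (Fin r) ℝ) (A12 : Matrix (Fin r) (Fin s) ℝ)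
    (A21 : Matrix (Fin s) (Fin r) ℝ) (A22 : Matrix (Fin s) (Fin s) ℝ)
    (N11 : Fin m → Matrix (Fin r) (Fin r) ℝ) (N12 : Fin m → Matrix (Fin r) (Fin s) ℝ)
    (N21 : Fin m → Matrix (Fin s) (Fin r) ℝ) (N22 : Fin m → Matrix (Fin s) (Fin s) ℝ)
    (C1 : Matrix (Fin p) (Fin r) ℝ) (C2 : Matrix (Fin p) (Fin s) ℝ)
    (Θ1 : Matrix (Fin r) (Fin r) ℝ) (Θ2 : Matrix (Fin s) (Fin s) ℝ)
    (hΘ1 : Θ1.PosSemidef) (hΘ2 : Θ2.PosSemidef)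
    (hAinv : IsUnit (Matrix.fromBlocks A11 A12 A21 A22))
    (hA22inv : IsUnit A22)
    (heq : (Matrix.fromBlocks A11 A12 A21 A22)ᵀ * Matrix.fromBlocks Θ1 0 0 Θ2
        + Matrix.fromBlocks Θ1 0 0 Θ2 * Matrix.fromBlocks A11 A12 A21 A22
        + (γ ^ 2)⁻¹ • ∑ k,
            (Matrix.fromBlocks (N11 k) (N12 k) (N21 k) (N22 k))ᵀ
              * Matrix.fromBlocks Θ1 0 0 Θ2
              * Matrix.fromBlocks (N11 k) (N12 k) (N21 k) (N22 k)
      = -((Matrix.fromCols C1 C2)ᵀ * Matrix.fromCols C1 C2)) :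
    ((A11 - A12 * A22⁻¹ * A21)ᵀ * Θ1 + Θ1 * (A11 - A12 * A22⁻¹ * A21)
        + (γ ^ 2)⁻¹ • ∑ k,
            (N11 k - N12 k * A22⁻¹ * A21)ᵀ * Θ1 * (N11 k - N12 k * A22⁻¹ * A21)
      = -((C1 - C2 * A22⁻¹ * A21)ᵀ * (C1 - C2 * A22⁻¹ * A21))
        - (γ ^ 2)⁻¹ • ∑ k,
            (N21 k - N22 k * A22⁻¹ * A21)ᵀ * Θ2 * (N21 k - N22 k * A22⁻¹ * A21))
    ∧ (-((C1 - C2 * A22⁻¹ * A21)ᵀ * (C1 - C2 * A22⁻¹ * A21))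
        - ((A11 - A12 * A22⁻¹ * A21)ᵀ * Θ1 + Θ1 * (A11 - A12 * A22⁻¹ * A21)
          + (γ ^ 2)⁻¹ • ∑ k,
              (N11 k - N12 k * A22⁻¹ * A21)ᵀ * Θ1
                * (N11 k - N12 k * A22⁻¹ * A21))).PosSemidef := by

  have hdet : IsUnit A22.det := (Matrix.isUnit_iff_isUnit_det _).mp hA22inv
  have hA22u : A22 * A22⁻¹ = 1 := Matrix.mul_nonsing_inv _ hdet
  set E : Matrix (Fin s) (Fin r) ℝ := A22⁻¹ * A21 with hE
  have hA22E : A22 * E = A21 := by rw [hE, ← Matrix.mul_assoc, hA22u, Matrix.one_mul]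
  set T : Matrix (Fin r ⊕ Fin s) (Fin r) ℝ := Matrix.fromRows 1 (-E) with hT
  have hs1 : Θ1ᵀ = Θ1 := hΘ1.1.eq
  have hs2 : Θ2ᵀ = Θ2 := hΘ2.1.eq
  have hAT : Matrix.fromBlocks A11 A12 A21 A22 * T
      = Matrix.fromRows (A11 - A12 * E) 0 := by
    rw [hT, Matrix.fromBlocks_mul_fromRows]
    simp [hA22E, sub_eq_add_neg]
  have hΘT : Matrix.fromBlocks Θ1 0 0 Θ2 * T = Matrix.fromRows Θ1 (-(Θ2 * E)) := by
    rw [hT, Matrix.fromBlocks_mul_fromRows]; simp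
  have hNT : ∀ k, Matrix.fromBlocks (N11 k) (N12 k) (N21 k) (N22 k) * T
      = Matrix.fromRows (N11 k - N12 k * E) (N21 k - N22 k * E) := by
    intro k
    rw [hT, Matrix.fromBlocks_mul_fromRows]
    simp [sub_eq_add_neg]
  have hCT : Matrix.fromCols C1 C2 * T = C1 - C2 * E := by
    rw [hT, Matrix.fromCols_mul_fromRows]; simp [sub_eq_add_neg]
  have hΘsym : (Matrix.fromBlocks Θ1 0 0 Θ2)ᵀ = Matrix.fromBlocks Θ1 0 0 Θ2 := by
    rw [Matrix.fromBlocks_transpose]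
    simp [hs1, hs2]
  have hTA' : Tᵀ * (Matrix.fromBlocks A11 A12 A21 A22)ᵀ
      = Matrix.fromCols (A11 - A12 * E)ᵀ 0 := by
    rw [← Matrix.transpose_mul, hAT, Matrix.transpose_fromRows]
    simp
  have hTΘ' : Tᵀ * Matrix.fromBlocks Θ1 0 0 Θ2
      = Matrix.fromCols Θ1 (-(Eᵀ * Θ2)) := by
    rw [← hΘsym, ← Matrix.transpose_mul, hΘT, Matrix.transpose_fromRows]
    simp [hs1, hs2]
  have hTN' : ∀ k, Tᵀ * (Matrix.fromBlocks (N11 k) (N12 k) (N21 k) (N22 k))ᵀ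
      = Matrix.fromCols (N11 k - N12 k * E)ᵀ (N21 k - N22 k * E)ᵀ := by
    intro k
    rw [← Matrix.transpose_mul, hNT k, Matrix.transpose_fromRows]
  have hTC' : Tᵀ * (Matrix.fromCols C1 C2)ᵀ = (C1 - C2 * E)ᵀ := by
    rw [← Matrix.transpose_mul, hCT]
  have h1 : Tᵀ * ((Matrix.fromBlocks A11 A12 A21 A22)ᵀ * Matrix.fromBlocks Θ1 0 0 Θ2) * T
      = (A11 - A12 * E)ᵀ * Θ1 := by
    rw [← Matrix.mul_assoc, hTA', Matrix.mul_assoc, hΘT, Matrix.fromCols_mul_fromRows]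
    simp
  have h2 : Tᵀ * (Matrix.fromBlocks Θ1 0 0 Θ2 * Matrix.fromBlocks A11 A12 A21 A22) * T
      = Θ1 * (A11 - A12 * E) := by
    rw [← Matrix.mul_assoc, hTΘ', Matrix.mul_assoc, hAT, Matrix.fromCols_mul_fromRows]
    simp
  have h3 : ∀ k, Tᵀ * ((Matrix.fromBlocks (N11 k) (N12 k) (N21 k) (N22 k))ᵀ
        * Matrix.fromBlocks Θ1 0 0 Θ2
        * Matrix.fromBlocks (N11 k) (N12 k) (N21 k) (N22 k)) * T
      = (N11 k - N12 k * E)ᵀ * Θ1 * (N11 k - N12 k * E)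
        + (N21 k - N22 k * E)ᵀ * Θ2 * (N21 k - N22 k * E) := by
    intro k
    rw [← Matrix.mul_assoc, ← Matrix.mul_assoc, hTN' k, Matrix.mul_assoc, Matrix.mul_assoc,
      hNT k, Matrix.fromBlocks_mul_fromRows, Matrix.fromCols_mul_fromRows]
    simp [Matrix.mul_assoc]
  have h4 : Tᵀ * ((Matrix.fromCols C1 C2)ᵀ * Matrix.fromCols C1 C2) * T
      = (C1 - C2 * E)ᵀ * (C1 - C2 * E) := by
    rw [← Matrix.mul_assoc, hTC', Matrix.mul_assoc, hCT]
  have key := congrArg (fun M => Tᵀ * M * T) heq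
  simp only [Matrix.add_mul, Matrix.mul_add, Matrix.mul_smul, Matrix.smul_mul,
    Matrix.mul_sum, Matrix.sum_mul, Matrix.mul_neg, Matrix.neg_mul] at key
  rw [h1, h2, h4] at key
  simp only [h3] at key
  rw [Finset.sum_add_distrib, smul_add, ← add_assoc] at key
  simp only [hE, ← Matrix.mul_assoc] at key
  constructor
  · rw [eq_sub_iff_add_eq]
    exact key
  · have heq2 : -((C1 - C2 * A22⁻¹ * A21)ᵀ * (C1 - C2 * A22⁻¹ * A21))
        - ((A11 - A12 * A22⁻¹ * A21)ᵀ * Θ1 + Θ1 * (A11 - A12 * A22⁻¹ * A21)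
          + (γ ^ 2)⁻¹ • ∑ k,
              (N11 k - N12 k * A22⁻¹ * A21)ᵀ * Θ1 * (N11 k - N12 k * A22⁻¹ * A21))
        = (γ ^ 2)⁻¹ • ∑ k,
            (N21 k - N22 k * A22⁻¹ * A21)ᵀ * Θ2 * (N21 k - N22 k * A22⁻¹ * A21) := by
      rw [sub_eq_iff_eq_add, ← key]
      abel
    rw [heq2]
    refine psd_smul (by positivity) (psd_sum _ _ fun k _ => ?_)
    have := hΘ2.conjTranspose_mul_mul_same (N21 k - N22 k * A22⁻¹ * A21)
    simpa using this
end
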